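/- Let n ≥ 3 and let α : ZMod n → ℝ satisfy (i) ∑_k α_k = n−1 and (ii) for every r : ZMod n, ∑_m α_m · α_{m+r} = (n−2) + (1 if r = 0 else 0). Define the complex matrix W, indexed by pairs (k,m) ∈ ZMod n × ZMod n, by W((k,m),(k',m')) = α_{m−k} if k=k' and m=m', −1 if k=m, k'=m' and k≠k', and 0 otherwise. Then W is block positive, i.e. Re⟨x⊗y, W(x⊗y)⟩ ≥ 0 for all x,y : ZMod n → ℂ, and W is not positive semidefinite; hence W is an entanglement witness. -/

import Mathlib

open Matrix Complex
open scoped ComplexOrder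

/-- The circulant Bell-diagonal witness candidate in `ℂ^n ⊗ ℂ^n`:
`W((k,m),(k',m')) = α_{m−k}` if `k=k', m=m'`; `−1` if `k=m, k'=m', k≠k'`; `0` otherwise. -/
noncomputable def circulantW (n : ℕ) (α : ZMod n → ℝ) :
    Matrix (ZMod n × ZMod n) (ZMod n × ZMod n) ℂ :=
  fun p q =>
    if p.1 = q.1 ∧ p.2 = q.2 then ((α (p.2 - p.1) : ℝ) : ℂ)
    else if p.1 = p.2 ∧ q.1 = q.2 ∧ p.1 ≠ q.1 then -1
    else 0

/-- The tensor (product) vector `x ⊗ y` in `ℂ^{n²}`. -/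
noncomputable def tensorVec (n : ℕ) (x y : ZMod n → ℂ) : ZMod n × ZMod n → ℂ :=
  fun p => x p.1 * y p.2

section Aux

variable {n : ℕ} [NeZero n]




lemma alpha_sq_sum (α : ZMod n → ℝ)
    (h2 : ∀ r : ZMod n, ∑ m : ZMod n, α m * α (m + r)
          = ((n : ℝ) - 2) + (if r = 0 then 1 else 0)) :
    ∑ m : ZMod n, α m ^ 2 = (n : ℝ) - 1 := by
  have h := h2 0
  simp only [add_zero, if_pos rfl] at h
  have h3 : ∑ m : ZMod n, α m ^ 2 = ∑ m : ZMod n, α m * α m :=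
    Finset.sum_congr rfl (fun m _ => by ring)
  rw [h3, h]; simp only [if_true]; ring

lemma alpha_nonneg (α : ZMod n → ℝ)
    (h1 : ∑ k : ZMod n, α k = (n : ℝ) - 1)
    (h2 : ∀ r : ZMod n, ∑ m : ZMod n, α m * α (m + r)
          = ((n : ℝ) - 2) + (if r = 0 then 1 else 0)) :
    ∀ r, 0 ≤ α r := by
  intro r
  have hsq := alpha_sq_sum α h2
  have hcard : (Finset.univ : Finset (ZMod n)).card = n := by
    simp [ZMod.card]
  have hone : ∑ m : ZMod n, (α m - 1) ^ 2 = 1 := by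
    have expand : ∀ m : ZMod n, (α m - 1) ^ 2 = α m ^ 2 - 2 * α m + 1 := fun m => by ring
    rw [Finset.sum_congr rfl (fun m _ => expand m), Finset.sum_add_distrib,
      Finset.sum_sub_distrib, ← Finset.mul_sum, Finset.sum_const, hcard, hsq, h1]
    simp
    ring
  have hle : (α r - 1) ^ 2 ≤ 1 :=
    le_of_le_of_eq (Finset.single_le_sum (fun i _ => sq_nonneg (α i - 1)) (Finset.mem_univ r)) hone
  nlinarith

lemma sum_shift (α : ZMod n → ℝ) (m : ZMod n) : ∑ k : ZMod n, α (m - k) = ∑ k : ZMod n, α k :=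
  Fintype.sum_equiv (Equiv.subLeft m) _ _ (fun _ => rfl)

lemma sum_corr (α : ZMod n → ℝ)
    (h2 : ∀ r : ZMod n, ∑ m : ZMod n, α m * α (m + r)
          = ((n : ℝ) - 2) + (if r = 0 then 1 else 0)) (m m' : ZMod n) :
    ∑ k : ZMod n, α (m - k) * α (m' - k) = ((n : ℝ) - 2) + (if m = m' then 1 else 0) := by
  have key : ∑ k : ZMod n, α (m - k) * α (m' - k)
      = ∑ j : ZMod n, α j * α (j + (m' - m)) := by
    apply Fintype.sum_equiv (Equiv.subLeft m)
    intro x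
    show α (m - x) * α (m' - x) = α (m - x) * α ((m - x) + (m' - m))
    have hx : m' - x = (m - x) + (m' - m) := by ring
    rw [hx]
  rw [key, h2 (m' - m)]
  congr 1
  by_cases h : m = m'
  · subst h; simp
  · have h' : m' - m ≠ 0 := fun hc => h (by rwa [sub_eq_zero, eq_comm] at hc)
    simp [h, h']

/-- The core "chord" inequality: if `q ≤ d` pointwise, both nonneg, `P = ∑ q > 0`,
and `∑ q (d - P) = (∑ (d-P)^2)/2`, then `∑ q/d ≤ 1`. -/
lemma sum_div_le_one (q d : ZMod n → ℝ) (P : ℝ)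
    (hq0 : ∀ k, 0 ≤ q k) (hqd : ∀ k, q k ≤ d k)
    (hPdef : P = ∑ k : ZMod n, q k) (hP : 0 < P)
    (hqu : ∑ k : ZMod n, q k * (d k - P) = (∑ k : ZMod n, (d k - P) ^ 2) / 2) :
    ∑ k : ZMod n, q k / d k ≤ 1 := by
  classical
  have hd0 : ∀ k, 0 ≤ d k := fun k => le_trans (hq0 k) (hqd k)
  obtain ⟨u, hu⟩ : ∃ u : ZMod n → ℝ, ∀ k, u k = d k - P := ⟨_, fun _ => rfl⟩
  rw [show (∑ k : ZMod n, q k * (d k - P)) = ∑ k : ZMod n, q k * u k from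
      Finset.sum_congr rfl (fun k _ => by rw [hu k]),
    show (∑ k : ZMod n, (d k - P) ^ 2) = ∑ k : ZMod n, (u k) ^ 2 from
      Finset.sum_congr rfl (fun k _ => by rw [hu k])] at hqu
  obtain ⟨k0, hk0⟩ : ∃ k, q k ≠ 0 := by
    by_contra h
    push_neg at h
    rw [hPdef, Finset.sum_eq_zero (fun k _ => h k)] at hP
    exact lt_irrefl 0 hP
  set s : Finset (ZMod n) := Finset.univ.filter (fun k => q k ≠ 0) with hsdef
  have hk0s : k0 ∈ s := by simp [hsdef, hk0]
  obtain ⟨k1, hk1s, hk1⟩ := s.exists_min_image u ⟨k0, hk0s⟩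
  obtain ⟨k2, hk2s, hk2⟩ := s.exists_max_image u ⟨k0, hk0s⟩
  obtain ⟨m1, hm1⟩ : ∃ m1 : ℝ, m1 = u k1 := ⟨_, rfl⟩
  obtain ⟨m2, hm2⟩ : ∃ m2 : ℝ, m2 = u k2 := ⟨_, rfl⟩
  have hqpos : ∀ k ∈ s, 0 < q k := fun k hk =>
    lt_of_le_of_ne (hq0 k) (Ne.symm ((Finset.mem_filter.1 hk).2))
  have hdpos : ∀ k ∈ s, 0 < d k := fun k hk => lt_of_lt_of_le (hqpos k hk) (hqd k)
  have hdP : ∀ k, d k = P + u k := fun k => by rw [hu k]; ring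
  have hPm1 : 0 < P + m1 := by rw [hm1, ← hdP k1]; exact hdpos k1 hk1s
  have hPm2 : 0 < P + m2 := by rw [hm2, ← hdP k2]; exact hdpos k2 hk2s
  obtain ⟨D, hDdef⟩ : ∃ D : ℝ, D = (P + m1) * (P + m2) := ⟨_, rfl⟩
  have hD : 0 < D := hDdef ▸ mul_pos hPm1 hPm2
  have claim1 : ∀ k : ZMod n, q k * (P * u k + m1 * m2) / D ≤ q k * u k / d k := by
    intro k
    by_cases hk : q k = 0
    · simp [hk]
    · have hks : k ∈ s := by simp [hsdef, hk]
      have hdk : 0 < d k := hdpos k hks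
      have hm1k : m1 ≤ u k := hm1 ▸ hk1 k hks
      have hm2k : u k ≤ m2 := hm2 ▸ hk2 k hks
      rw [div_le_div_iff₀ hD hdk]
      have hiden : u k * D - (P * u k + m1 * m2) * d k = P * ((u k - m1) * (m2 - u k)) := by
        rw [hDdef, hdP k]; ring
      have hpos : 0 ≤ P * ((u k - m1) * (m2 - u k)) :=
        mul_nonneg hP.le (mul_nonneg (by linarith) (by linarith))
      have hle : (P * u k + m1 * m2) * d k ≤ u k * D := by linarith
      calc q k * (P * u k + m1 * m2) * d k = q k * ((P * u k + m1 * m2) * d k) := by ring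
        _ ≤ q k * (u k * D) := mul_le_mul_of_nonneg_left hle (hq0 k)
        _ = q k * u k * D := by ring
  have claim3 : 0 ≤ (∑ k : ZMod n, (u k) ^ 2) / 2 + m1 * m2 := by
    rcases le_or_gt 0 (m1 * m2) with h | h
    · have h9 : 0 ≤ (∑ k : ZMod n, (u k) ^ 2) / 2 :=
        div_nonneg (Finset.sum_nonneg (fun k _ => sq_nonneg _)) (by norm_num)
      linarith
    · have hne : k1 ≠ k2 := by
        rintro rfl
        rw [hm1, hm2] at h
        nlinarith [sq_nonneg (u k1)]
      have hsub : m1 ^ 2 + m2 ^ 2 ≤ ∑ k : ZMod n, (u k) ^ 2 := by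
        have h10 := Finset.sum_le_sum_of_subset_of_nonneg
          (Finset.subset_univ ({k1, k2} : Finset (ZMod n))) (fun i _ _ => sq_nonneg (u i))
        rw [Finset.sum_pair hne] at h10
        rw [hm1, hm2]
        exact h10
      nlinarith [sq_nonneg (m1 + m2)]
  have hN : 0 ≤ ∑ k : ZMod n, q k * u k / d k := by
    have h6 : ∑ k : ZMod n, q k * (P * u k + m1 * m2) / D ≤ ∑ k : ZMod n, q k * u k / d k :=
      Finset.sum_le_sum (fun k _ => claim1 k)
    have h7 : ∑ k : ZMod n, q k * (P * u k + m1 * m2) / D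
        = (P * (∑ k : ZMod n, q k * u k) + m1 * m2 * P) / D := by
      rw [← Finset.sum_div]
      congr 1
      rw [Finset.sum_congr rfl (fun k _ => by ring :
          ∀ k ∈ Finset.univ, q k * (P * u k + m1 * m2) = P * (q k * u k) + (m1 * m2) * q k),
        Finset.sum_add_distrib, ← Finset.mul_sum, ← Finset.mul_sum, ← hPdef]
    have h8 : 0 ≤ (P * (∑ k : ZMod n, q k * u k) + m1 * m2 * P) / D := by
      apply div_nonneg _ hD.le
      rw [hqu]
      nlinarith [claim3, hP]
    linarith
  have idk : ∀ k : ZMod n, q k / d k = q k / P - q k * u k / d k / P := by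
    intro k
    by_cases hdk : d k = 0
    · have hqk : q k = 0 := le_antisymm (hdk ▸ hqd k) (hq0 k)
      simp [hqk, hdk]
    · have hP' : P ≠ 0 := ne_of_gt hP
      rw [hu k]
      field_simp
      ring
  rw [Finset.sum_congr rfl (fun k _ => idk k), Finset.sum_sub_distrib, ← Finset.sum_div,
    ← Finset.sum_div, ← hPdef, div_self (ne_of_gt hP)]
  have h11 : 0 ≤ (∑ k : ZMod n, q k * u k / d k) / P := div_nonneg hN hP.le
  linarith

lemma key_ineq (α : ZMod n → ℝ)
    (h1 : ∑ k : ZMod n, α k = (n : ℝ) - 1)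
    (h2 : ∀ r : ZMod n, ∑ m : ZMod n, α m * α (m + r)
          = ((n : ℝ) - 2) + (if r = 0 then 1 else 0))
    (a b : ZMod n → ℝ) :
    (∑ k : ZMod n, a k * b k) ^ 2
      ≤ ∑ k : ZMod n, (a k) ^ 2 * ((b k) ^ 2 + ∑ m : ZMod n, α (m - k) * (b m) ^ 2) := by
  classical
  have hα := alpha_nonneg α h1 h2
  have hcard : (Finset.univ : Finset (ZMod n)).card = n := by simp [ZMod.card]
  obtain ⟨c, hc⟩ : ∃ c : ZMod n → ℝ, ∀ k, c k = ∑ m : ZMod n, α (m - k) * (b m) ^ 2 :=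
    ⟨_, fun _ => rfl⟩
  obtain ⟨d, hd⟩ : ∃ d : ZMod n → ℝ, ∀ k, d k = (b k) ^ 2 + c k := ⟨_, fun _ => rfl⟩
  obtain ⟨P, hPdef⟩ : ∃ P : ℝ, P = ∑ k : ZMod n, (b k) ^ 2 := ⟨_, rfl⟩
  have hc0 : ∀ k, 0 ≤ c k := fun k => by
    rw [hc k]; exact Finset.sum_nonneg (fun m _ => mul_nonneg (hα _) (sq_nonneg _))
  have hqd : ∀ k, (b k) ^ 2 ≤ d k := fun k => by rw [hd k]; linarith [hc0 k]
  have hd0 : ∀ k, 0 ≤ d k := fun k => le_trans (sq_nonneg _) (hqd k)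
  have hP0 : 0 ≤ P := hPdef ▸ Finset.sum_nonneg (fun k _ => sq_nonneg _)
  have hRHS : ∑ k : ZMod n, (a k) ^ 2 * ((b k) ^ 2 + ∑ m : ZMod n, α (m - k) * (b m) ^ 2)
      = ∑ k : ZMod n, (a k) ^ 2 * d k :=
    Finset.sum_congr rfl (fun k _ => by rw [hd k, hc k])
  rw [hRHS]
  rcases eq_or_lt_of_le hP0 with hP | hP
  · have hqz : ∀ k, (b k : ℝ) ^ 2 = 0 := fun k =>
      (Finset.sum_eq_zero_iff_of_nonneg (fun k _ => sq_nonneg (b k))).1 (hPdef ▸ hP.symm) k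
        (Finset.mem_univ k)
    have hbz : ∀ k, b k = 0 := fun k => pow_eq_zero_iff two_ne_zero |>.1 (hqz k)
    rw [Finset.sum_eq_zero (fun k _ => by rw [hbz k, mul_zero])]
    simpa using Finset.sum_nonneg (fun k _ => mul_nonneg (sq_nonneg (a k)) (hd0 k))
  -- sums of c
  have hsum_c : ∑ k : ZMod n, c k = ((n : ℝ) - 1) * P := by
    rw [Finset.sum_congr rfl (fun k _ => hc k), Finset.sum_comm]
    rw [Finset.sum_congr rfl (fun m _ => by rw [← Finset.sum_mul, sum_shift α m, h1] :
      ∀ m ∈ Finset.univ, ∑ k : ZMod n, α (m - k) * (b m) ^ 2 = ((n:ℝ) - 1) * (b m) ^ 2),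
      ← Finset.mul_sum, ← hPdef]
  have hsum_c2 : ∑ k : ZMod n, (c k) ^ 2
      = ((n : ℝ) - 2) * P ^ 2 + ∑ k : ZMod n, (b k) ^ 4 := by
    have expand : ∀ k : ZMod n, (c k) ^ 2
        = ∑ m : ZMod n, ∑ m' : ZMod n, (α (m - k) * α (m' - k)) * ((b m) ^ 2 * (b m') ^ 2) := by
      intro k
      rw [hc k, sq, Finset.sum_mul_sum]
      exact Finset.sum_congr rfl (fun m _ => Finset.sum_congr rfl (fun m' _ => by ring))
    rw [Finset.sum_congr rfl (fun k _ => expand k), Finset.sum_comm]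
    have swap2 : ∀ m : ZMod n,
        ∑ k : ZMod n, ∑ m' : ZMod n, (α (m - k) * α (m' - k)) * ((b m) ^ 2 * (b m') ^ 2)
        = ∑ m' : ZMod n, (((n:ℝ) - 2) + if m = m' then 1 else 0) * ((b m) ^ 2 * (b m') ^ 2) := by
      intro m
      rw [Finset.sum_comm]
      exact Finset.sum_congr rfl (fun m' _ => by rw [← Finset.sum_mul, sum_corr α h2 m m'])
    rw [Finset.sum_congr rfl (fun m _ => swap2 m)]
    have expand2 : ∀ m : ZMod n,
        ∑ m' : ZMod n, (((n:ℝ) - 2) + if m = m' then 1 else 0) * ((b m) ^ 2 * (b m') ^ 2)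
        = ((n:ℝ) - 2) * ((b m) ^ 2 * P) + (b m) ^ 4 := by
      intro m
      rw [Finset.sum_congr rfl (fun m' _ => by by_cases h : m = m' <;> simp [h] <;> ring :
        ∀ m' ∈ Finset.univ, (((n:ℝ) - 2) + if m = m' then 1 else 0) * ((b m) ^ 2 * (b m') ^ 2)
          = ((n:ℝ) - 2) * ((b m) ^ 2 * (b m') ^ 2) + (if m = m' then (b m)^2 * (b m')^2 else 0))]
      rw [Finset.sum_add_distrib, ← Finset.mul_sum, ← Finset.mul_sum, Finset.sum_ite_eq]
      simp only [Finset.mem_univ, if_true]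
      rw [← hPdef]; ring
    rw [Finset.sum_congr rfl (fun m _ => expand2 m), Finset.sum_add_distrib, ← Finset.mul_sum,
      ← Finset.sum_mul, ← hPdef]
    ring_nf
  -- hqu
  have e1 : ∑ k : ZMod n, (b k) ^ 2 * (d k - P)
      = (∑ k : ZMod n, (b k) ^ 4) + (∑ k : ZMod n, (b k) ^ 2 * c k) - P * P := by
    rw [Finset.sum_congr rfl (fun k _ => by rw [hd k]; ring :
      ∀ k ∈ Finset.univ, (b k) ^ 2 * (d k - P)
        = ((b k) ^ 4 + (b k) ^ 2 * c k) - P * (b k) ^ 2),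
      Finset.sum_sub_distrib, Finset.sum_add_distrib, ← Finset.mul_sum, ← hPdef]
  have e2 : ∑ k : ZMod n, (d k - P) ^ 2
      = 2 * (∑ k : ZMod n, (b k) ^ 4) + 2 * (∑ k : ZMod n, (b k) ^ 2 * c k)
        - 2 * (P * P) := by
    rw [Finset.sum_congr rfl (fun k _ => by rw [hd k]; ring :
      ∀ k ∈ Finset.univ, (d k - P) ^ 2
        = (((((b k) ^ 4 + (c k) ^ 2) + P ^ 2) + 2 * ((b k) ^ 2 * c k))
            - 2 * P * (b k) ^ 2) - 2 * P * c k),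
      Finset.sum_sub_distrib, Finset.sum_sub_distrib, Finset.sum_add_distrib,
      Finset.sum_add_distrib, Finset.sum_add_distrib, ← Finset.mul_sum, ← Finset.mul_sum,
      ← Finset.mul_sum, Finset.sum_const, hcard, nsmul_eq_mul, ← hPdef, hsum_c, hsum_c2]
    ring
  have hqu : ∑ k : ZMod n, (b k) ^ 2 * (d k - P) = (∑ k : ZMod n, (d k - P) ^ 2) / 2 := by
    rw [e1, e2]; ring
  have hT : ∑ k : ZMod n, (b k) ^ 2 / d k ≤ 1 :=
    sum_div_le_one (fun k => (b k) ^ 2) d P (fun k => sq_nonneg _) hqd hPdef hP hqu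
  -- Cauchy-Schwarz
  have hCS := Finset.sum_mul_sq_le_sq_mul_sq Finset.univ
    (fun k => a k * Real.sqrt (d k)) (fun k => b k / Real.sqrt (d k))
  have hfg : ∀ k : ZMod n, (a k * Real.sqrt (d k)) * (b k / Real.sqrt (d k)) = a k * b k := by
    intro k
    by_cases hdk : d k = 0
    · have hq2 : (b k) ^ 2 = 0 := le_antisymm (hdk ▸ hqd k) (sq_nonneg _)
      have hbk : b k = 0 := pow_eq_zero_iff two_ne_zero |>.1 hq2
      simp [hbk]
    · have hs : Real.sqrt (d k) ≠ 0 := by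
        rw [Real.sqrt_ne_zero']
        exact lt_of_le_of_ne (hd0 k) (Ne.symm hdk)
      field_simp
  have hf2 : ∀ k : ZMod n, (a k * Real.sqrt (d k)) ^ 2 = a k ^ 2 * d k := by
    intro k; rw [mul_pow, Real.sq_sqrt (hd0 k)]
  have hg2 : ∀ k : ZMod n, (b k / Real.sqrt (d k)) ^ 2 = (b k) ^ 2 / d k := by
    intro k; rw [div_pow, Real.sq_sqrt (hd0 k)]
  rw [Finset.sum_congr rfl (fun k _ => hfg k), Finset.sum_congr rfl (fun k _ => hf2 k),
    Finset.sum_congr rfl (fun k _ => hg2 k)] at hCS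
  have hAd : 0 ≤ ∑ k : ZMod n, a k ^ 2 * d k :=
    Finset.sum_nonneg (fun k _ => mul_nonneg (sq_nonneg _) (hd0 k))
  calc (∑ k : ZMod n, a k * b k) ^ 2
      ≤ (∑ k : ZMod n, a k ^ 2 * d k) * (∑ k : ZMod n, (b k) ^ 2 / d k) := hCS
    _ ≤ (∑ k : ZMod n, a k ^ 2 * d k) * 1 := mul_le_mul_of_nonneg_left hT hAd
    _ = ∑ k : ZMod n, a k ^ 2 * d k := by ring

lemma qform (α : ZMod n → ℝ) (v : ZMod n × ZMod n → ℂ) :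
    ∑ i : ZMod n × ZMod n, star (v i) * (circulantW n α).mulVec v i
    = (∑ i : ZMod n × ZMod n, ((α (i.2 - i.1) : ℝ) : ℂ) * (Complex.normSq (v i) : ℂ))
      + (∑ k : ZMod n, (Complex.normSq (v (k, k)) : ℂ))
      - (Complex.normSq (∑ k : ZMod n, v (k, k)) : ℂ) := by
  classical
  obtain ⟨e, he⟩ : ∃ e : ZMod n × ZMod n → ℂ,
      ∀ p, e p = if p.1 = p.2 then (1 : ℂ) else 0 := ⟨_, fun _ => rfl⟩
  have hsq : ∀ z : ℂ, star z * z = (Complex.normSq z : ℂ) := fun z => by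
    rw [Complex.star_def, mul_comm, Complex.mul_conj]
  set Sd : ℂ := ∑ k : ZMod n, v (k, k) with hSddef
  have hW : ∀ i j, circulantW n α i j
      = (if i = j then (((α (i.2 - i.1) : ℝ) : ℂ) + e i) else 0) - e i * e j := by
    intro i j
    rw [he i, he j]
    by_cases hij : i = j
    · subst hij
      have : circulantW n α i i = ((α (i.2 - i.1) : ℝ) : ℂ) := by
        simp [circulantW]
      rw [this]
      by_cases hdiag : i.1 = i.2 <;> simp [hdiag]
    · have hcond : ¬(i.1 = j.1 ∧ i.2 = j.2) := fun h => hij (Prod.ext h.1 h.2)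
      by_cases h1 : i.1 = i.2
      · by_cases h2 : j.1 = j.2
        · have hne : i.1 ≠ j.1 := by
            intro h
            exact hij (Prod.ext h (by rw [← h1, h, h2]))
          have hne2 : i.2 ≠ j.2 := by rw [← h1, ← h2]; exact hne
          simp [circulantW, hcond, h1, h2, hne, hne2, hij]
        · simp [circulantW, hcond, h2, hij]
      · simp [circulantW, hcond, h1, hij]
  have hSde : ∑ j : ZMod n × ZMod n, e j * v j = Sd := by
    rw [hSddef, Fintype.sum_prod_type]
    refine Finset.sum_congr rfl (fun k _ => ?_)
    have : ∀ m : ZMod n, e (k, m) * v (k, m) = if k = m then v (k, m) else 0 := by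
      intro m
      rw [he (k, m)]
      by_cases h : k = m <;> simp [h]
    rw [Finset.sum_congr rfl (fun m _ => this m), Finset.sum_ite_eq]
    simp
  have hmv : ∀ i, (circulantW n α).mulVec v i
      = (((α (i.2 - i.1) : ℝ) : ℂ) + e i) * v i - e i * Sd := by
    intro i
    show ∑ j, circulantW n α i j * v j = _
    have : ∀ j, circulantW n α i j * v j
        = (if i = j then (((α (i.2 - i.1) : ℝ) : ℂ) + e i) * v j else 0) - e i * (e j * v j) := by
      intro j
      rw [hW i j]
      by_cases h : i = j <;> simp [h] <;> ring
    rw [Finset.sum_congr rfl (fun j _ => this j), Finset.sum_sub_distrib, Finset.sum_ite_eq,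
      ← Finset.mul_sum, hSde]
    simp
  calc ∑ i : ZMod n × ZMod n, star (v i) * (circulantW n α).mulVec v i
      = ∑ i : ZMod n × ZMod n,
          ((((α (i.2 - i.1) : ℝ) : ℂ) * (star (v i) * v i) + e i * (star (v i) * v i))
            - (e i * star (v i)) * Sd) := by
        refine Finset.sum_congr rfl (fun i _ => ?_)
        rw [hmv i]; ring
    _ = (∑ i : ZMod n × ZMod n, ((α (i.2 - i.1) : ℝ) : ℂ) * (star (v i) * v i))
          + (∑ i : ZMod n × ZMod n, e i * (star (v i) * v i))
          - (∑ i : ZMod n × ZMod n, e i * star (v i)) * Sd := by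
        rw [Finset.sum_sub_distrib, Finset.sum_add_distrib, Finset.sum_mul]
    _ = _ := by
        congr 1
        · congr 1
          · exact Finset.sum_congr rfl (fun i _ => by rw [hsq (v i)])
          · rw [Fintype.sum_prod_type]
            refine Finset.sum_congr rfl (fun k _ => ?_)
            have : ∀ m : ZMod n, e (k, m) * (star (v (k, m)) * v (k, m))
                = if k = m then star (v (k, m)) * v (k, m) else 0 := by
              intro m
              rw [he (k, m)]
              by_cases h : k = m <;> simp [h]
            rw [Finset.sum_congr rfl (fun m _ => this m), Finset.sum_ite_eq]
            simp only [Finset.mem_univ, if_true]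
            exact hsq _
        · have hstar : ∑ i : ZMod n × ZMod n, e i * star (v i) = star Sd := by
            rw [hSddef, star_sum, Fintype.sum_prod_type]
            refine Finset.sum_congr rfl (fun k _ => ?_)
            have : ∀ m : ZMod n, e (k, m) * star (v (k, m))
                = if k = m then star (v (k, m)) else 0 := by
              intro m
              rw [he (k, m)]
              by_cases h : k = m <;> simp [h]
            rw [Finset.sum_congr rfl (fun m _ => this m), Finset.sum_ite_eq]
            simp
          rw [hstar, hsq Sd]

end Aux

theorem circulantW_is_entanglement_witness (n : ℕ) [NeZero n] (hn : 3 ≤ n)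
    (α : ZMod n → ℝ)
    (h1 : ∑ k : ZMod n, α k = (n : ℝ) - 1)
    (h2 : ∀ r : ZMod n, ∑ m : ZMod n, α m * α (m + r)
          = ((n : ℝ) - 2) + (if r = 0 then 1 else 0)) :
    (∀ x y : ZMod n → ℂ,
      0 ≤ (∑ i : ZMod n × ZMod n,
        star (tensorVec n x y i) * (circulantW n α).mulVec (tensorVec n x y) i).re) ∧
    ¬ (circulantW n α).PosSemidef := by
  classical
  have hcard : (Finset.univ : Finset (ZMod n)).card = n := by simp [ZMod.card]
  constructor
  · -- block positivity
    intro x y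
    rw [qform α (tensorVec n x y)]
    set v : ZMod n × ZMod n → ℂ := tensorVec n x y with hv
    have hre : ((∑ i : ZMod n × ZMod n, ((α (i.2 - i.1) : ℝ) : ℂ) * (Complex.normSq (v i) : ℂ))
        + (∑ k : ZMod n, (Complex.normSq (v (k, k)) : ℂ))
        - (Complex.normSq (∑ k : ZMod n, v (k, k)) : ℂ)).re
        = (∑ i : ZMod n × ZMod n, α (i.2 - i.1) * Complex.normSq (v i))
          + (∑ k : ZMod n, Complex.normSq (v (k, k)))
          - Complex.normSq (∑ k : ZMod n, v (k, k)) := by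
      rw [Complex.sub_re, Complex.add_re, Complex.re_sum, Complex.re_sum]
      simp [← Complex.ofReal_mul]
    rw [hre]
    -- introduce moduli
    obtain ⟨a, ha⟩ : ∃ a : ZMod n → ℝ, ∀ k, a k = ‖x k‖ := ⟨_, fun _ => rfl⟩
    obtain ⟨b, hb⟩ : ∃ b : ZMod n → ℝ, ∀ k, b k = ‖y k‖ := ⟨_, fun _ => rfl⟩
    have hns : ∀ i : ZMod n × ZMod n, Complex.normSq (v i) = (a i.1) ^ 2 * (b i.2) ^ 2 := by
      intro i
      rw [hv]
      show Complex.normSq (x i.1 * y i.2) = _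
      rw [Complex.normSq_mul, ← Complex.sq_norm, ← Complex.sq_norm, ha, hb]
    have hnsd : ∀ k : ZMod n, Complex.normSq (v (k, k)) = (a k) ^ 2 * (b k) ^ 2 := fun k => hns (k, k)
    have hSbound : Complex.normSq (∑ k : ZMod n, v (k, k)) ≤ (∑ k : ZMod n, a k * b k) ^ 2 := by
      rw [← Complex.sq_norm]
      have h1' : ‖∑ k : ZMod n, v (k, k)‖ ≤ ∑ k : ZMod n, a k * b k := by
        refine le_trans (norm_sum_le _ _) (le_of_eq ?_)
        refine Finset.sum_congr rfl (fun k _ => ?_)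
        rw [hv]
        show ‖x k * y k‖ = a k * b k
        rw [norm_mul, ha, hb]
      have h2' : 0 ≤ ‖∑ k : ZMod n, v (k, k)‖ := norm_nonneg _
      exact pow_le_pow_left₀ h2' h1' 2
    have hkey := key_ineq α h1 h2 a b
    have hmatch : ∑ k : ZMod n, (a k) ^ 2 * ((b k) ^ 2 + ∑ m : ZMod n, α (m - k) * (b m) ^ 2)
        = (∑ k : ZMod n, (a k) ^ 2 * (b k) ^ 2)
          + ∑ i : ZMod n × ZMod n, α (i.2 - i.1) * Complex.normSq (v i) := by
      have expand : ∀ k : ZMod n, (a k) ^ 2 * ((b k) ^ 2 + ∑ m : ZMod n, α (m - k) * (b m) ^ 2)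
          = (a k) ^ 2 * (b k) ^ 2 + ∑ m : ZMod n, α (m - k) * ((a k) ^ 2 * (b m) ^ 2) := by
        intro k
        rw [mul_add, Finset.mul_sum]
        congr 1
        exact Finset.sum_congr rfl (fun m _ => by ring)
      rw [Finset.sum_congr rfl (fun k _ => expand k), Finset.sum_add_distrib]
      congr 1
      rw [Fintype.sum_prod_type]
      exact Finset.sum_congr rfl (fun k _ => Finset.sum_congr rfl (fun m _ => by rw [hns (k, m)]))
    rw [hmatch] at hkey
    have hsum_eq : ∑ k : ZMod n, Complex.normSq (v (k, k)) = ∑ k : ZMod n, (a k) ^ 2 * (b k) ^ 2 :=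
      Finset.sum_congr rfl (fun k _ => hnsd k)
    rw [hsum_eq]
    linarith [hSbound, hkey]
  · -- not positive semidefinite
    rw [posSemidef_iff_dotProduct_mulVec]; rintro ⟨-, hpos⟩
    obtain ⟨w, hw⟩ : ∃ w : ZMod n × ZMod n → ℂ,
        ∀ p, w p = if p.1 = p.2 then (1 : ℂ) else 0 := ⟨_, fun _ => rfl⟩
    have hval := hpos w
    have hdot : star w ⬝ᵥ (circulantW n α).mulVec w
        = ∑ i : ZMod n × ZMod n, star (w i) * (circulantW n α).mulVec w i := by
      rfl
    rw [hdot, qform α w] at hval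
    -- compute the three pieces
    have hp1 : ∑ i : ZMod n × ZMod n, ((α (i.2 - i.1) : ℝ) : ℂ) * (Complex.normSq (w i) : ℂ)
        = (n : ℂ) * ((α 0 : ℝ) : ℂ) := by
      have : ∀ i : ZMod n × ZMod n, ((α (i.2 - i.1) : ℝ) : ℂ) * (Complex.normSq (w i) : ℂ)
          = if i.1 = i.2 then ((α 0 : ℝ) : ℂ) else 0 := by
        intro i
        rw [hw i]
        by_cases h : i.1 = i.2
        · have : i.2 - i.1 = 0 := by rw [← h, sub_self]
          simp [h, this]
        · simp [h]
      rw [Finset.sum_congr rfl (fun i _ => this i), Fintype.sum_prod_type]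
      have inner : ∀ k : ZMod n,
          (∑ m : ZMod n, if k = m then ((α 0 : ℝ) : ℂ) else 0) = ((α 0 : ℝ) : ℂ) := by
        intro k
        rw [Finset.sum_ite_eq]
        simp
      rw [Finset.sum_congr rfl (fun k _ => inner k), Finset.sum_const, hcard, nsmul_eq_mul]
    have hp2 : ∑ k : ZMod n, (Complex.normSq (w (k, k)) : ℂ) = (n : ℂ) := by
      have : ∀ k : ZMod n, (Complex.normSq (w (k, k)) : ℂ) = 1 := by
        intro k
        rw [hw (k, k)]
        simp
      rw [Finset.sum_congr rfl (fun k _ => this k), Finset.sum_const, hcard, nsmul_eq_mul, mul_one]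
    have hp3 : (Complex.normSq (∑ k : ZMod n, w (k, k)) : ℂ) = (n : ℂ) * (n : ℂ) := by
      have : ∑ k : ZMod n, w (k, k) = (n : ℂ) := by
        rw [Finset.sum_congr rfl (fun k _ => by rw [hw (k, k)]; simp :
          ∀ k ∈ Finset.univ, w (k, k) = (1 : ℂ)), Finset.sum_const, hcard, nsmul_eq_mul, mul_one]
      rw [this]
      rw [show ((n : ℂ)) = (((n : ℝ) : ℂ)) by push_cast; ring]
      rw [Complex.normSq_ofReal]
      push_cast
      ring
    rw [hp1, hp2, hp3] at hval
    have hre : (0 : ℝ) ≤ (n : ℝ) * α 0 + (n : ℝ) - (n : ℝ) * (n : ℝ) := by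
      rw [Complex.le_def] at hval
      have := hval.1
      simpa using this
    have hα0sq : (α 0) ^ 2 ≤ (n : ℝ) - 1 := by
      have hs := alpha_sq_sum α h2
      have := Finset.single_le_sum (fun (i : ZMod n) _ => sq_nonneg (α i)) (Finset.mem_univ 0)
      linarith [hs ▸ this]
    have hn3 : (3 : ℝ) ≤ (n : ℝ) := by exact_mod_cast hn
    have hnpos : (0 : ℝ) < (n : ℝ) := by linarith
    have hα0big : (n : ℝ) - 1 ≤ α 0 := by
      have h' : (n : ℝ) * ((n : ℝ) - 1) ≤ (n : ℝ) * α 0 := by linarith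
      exact le_of_mul_le_mul_left h' hnpos
    nlinarith [hα0sq, hα0big, hn3]
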